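/- Algorithm 3 (sequential allocation by proportional cut-points) always outputs an allocation of [0,1] into n consecutive intervals, one per agent, such that each agent's interval is worth at least 1/n of that agent's reported total value; moreover the allocation is entire (the intervals cover [0,1]). -/

import Mathlib

open MeasureTheory Set intervalIntegral

/-- The value of set `X` under value density function `f`. -/
noncomputable def val (f : ℝ → ℝ) (X : Set ℝ) : ℝ := ∫ t in X, f t

/-- `f` is piecewise constant on `[0,1]`. -/
def PWC (f : ℝ → ℝ) : Prop :=
  ∃ m : ℕ, ∃ t : ℕ → ℝ, t 0 = 0 ∧ t m = 1 ∧ (∀ j < m, t j < t (j + 1)) ∧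
    ∀ j < m, ∀ x ∈ Set.Ico (t j) (t (j + 1)), f x = f (t j)

lemma pwc_integrableOn {f : ℝ → ℝ} (hpwc : PWC f) :
    IntegrableOn f (Set.Icc (0:ℝ) 1) := by
  obtain ⟨m, t, ht0, htm, hlt, hconst⟩ := hpwc
  have hmono : ∀ j k, j ≤ k → k ≤ m → t j ≤ t k := by
    intro j k hjk hkm
    induction k with
    | zero => simp [Nat.le_zero.mp hjk]
    | succ k ih =>
      rcases Nat.lt_or_ge j (k + 1) with h | h
      · exact le_trans (ih (Nat.lt_succ_iff.mp h) (by omega))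
          (le_of_lt (hlt k (by omega)))
      · have : j = k + 1 := le_antisymm hjk h
        simp [this]
  have key : ∀ k ≤ m, IntegrableOn f (Set.Ico (t 0) (t k)) := by
    intro k hk
    induction k with
    | zero => simp
    | succ k ih =>
      have h1 : IntegrableOn f (Set.Ico (t k) (t (k + 1))) := by
        have hc : IntegrableOn (fun _ => f (t k)) (Set.Ico (t k) (t (k + 1))) :=
          (integrableOn_const_iff).mpr (Or.inr measure_Ico_lt_top)
        exact hc.congr_fun (fun y hy => (hconst k (by omega) y hy).symm) measurableSet_Ico
      have h2 := (ih (by omega)).union h1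
      rwa [Set.Ico_union_Ico_eq_Ico (hmono 0 k (Nat.zero_le _) (by omega))
        (le_of_lt (hlt k (by omega)))] at h2
  have h1 : IntegrableOn f ({1} : Set ℝ) := by
    rw [IntegrableOn, Measure.restrict_eq_zero.mpr (by simp)]
    exact integrable_zero_measure
  have h2 := (key m le_rfl).union h1
  rw [ht0, htm] at h2
  rwa [Set.Ico_union_right zero_le_one] at h2

/-- Algorithm 3 (sequential allocation by proportional cut-points) outputs an entire
allocation of `[0,1]` into `n` consecutive intervals, one per agent, each worth at least
`1/n` of the receiving agent's reported total value. -/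
theorem algorithm_three_proportional_entire
    (n : ℕ) (hn : 2 ≤ n)
    (f : Fin n → ℝ → ℝ)
    (hpwc : ∀ i, PWC (f i))
    (hmeas : ∀ i, Measurable (f i))
    (hpos : ∀ i, ∀ t ∈ Set.Icc (0:ℝ) 1, 0 < f i t)
    -- per-agent proportional cut points
    (x : Fin n → ℕ → ℝ)
    (hx0 : ∀ i, x i 0 = 0) (hxn : ∀ i, x i n = 1)
    (hxmono : ∀ i, ∀ j < n, x i j < x i (j + 1))
    (hxeq : ∀ i, ∀ j < n,
      (∫ t in x i j..x i (j + 1), f i t) = (1 / n) * ∫ t in (0:ℝ)..1, f i t)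
    -- σ enumerates the agents in allocation order; in round j the chosen agent minimizes
    -- x · (j+1) among agents not yet allocated
    (σ : ℕ → Fin n) (hσ : ∀ i : Fin n, ∃! j, j < n ∧ σ j = i)
    (hmin : ∀ j k, j ≤ k → k < n → x (σ j) (j + 1) ≤ x (σ k) (j + 1))
    (c : ℕ → ℝ) (hc0 : c 0 = 0)
    (hc : ∀ j, 1 ≤ j → j ≤ n - 1 → c j = x (σ (j - 1)) j)
    (A : ℕ → Set ℝ)
    (hA : ∀ j < n, A j = if j = n - 1 then Set.Icc (c j) 1 else Set.Ico (c j) (c (j + 1))) :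
    (∀ j < n, val (f (σ j)) (A j) ≥ (1 / n) * val (f (σ j)) (Set.Icc 0 1)) ∧
    (⋃ j ∈ Finset.range n, A j) = Set.Icc (0:ℝ) 1 := by
  -- monotonicity of the cut-point sequences
  have hxm : ∀ i, ∀ j k, j ≤ k → k ≤ n → x i j ≤ x i k := by
    intro i j k hjk hkn
    induction k with
    | zero => simp [Nat.le_zero.mp hjk]
    | succ k ih =>
      rcases Nat.lt_or_ge j (k + 1) with h | h
      · exact le_trans (ih (Nat.lt_succ_iff.mp h) (by omega))
          (le_of_lt (hxmono i k (by omega)))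
      · have : j = k + 1 := le_antisymm hjk h
        simp [this]
  have hxmem : ∀ i, ∀ j ≤ n, x i j ∈ Set.Icc (0:ℝ) 1 := by
    intro i j hj
    constructor
    · have := hxm i 0 j (Nat.zero_le _) hj; rwa [hx0 i] at this
    · have := hxm i j n hj le_rfl; rwa [hxn i] at this
  -- interval integrability
  have hii : ∀ i, ∀ a b : ℝ, a ∈ Set.Icc (0:ℝ) 1 → b ∈ Set.Icc (0:ℝ) 1 →
      IntervalIntegrable (f i) volume a b := by
    intro i a b ha hb
    apply IntegrableOn.intervalIntegrable
    apply (pwc_integrableOn (hpwc i)).mono_set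
    have ha' : a ∈ Set.uIcc (0:ℝ) 1 := by rw [Set.uIcc_of_le (zero_le_one' ℝ)]; exact ha
    have hb' : b ∈ Set.uIcc (0:ℝ) 1 := by rw [Set.uIcc_of_le (zero_le_one' ℝ)]; exact hb
    exact (Set.uIcc_of_le (zero_le_one' ℝ)) ▸ Set.uIcc_subset_uIcc ha' hb'
  -- key invariant
  have hkey : ∀ j < n, c j ≤ x (σ j) j := by
    intro j hj
    rcases Nat.eq_zero_or_pos j with h0 | h1
    · subst h0; rw [hc0, hx0]
    · rw [hc j h1 (by omega)]
      have := hmin (j - 1) j (by omega) hj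
      rwa [Nat.sub_add_cancel h1] at this
  have hcmem : ∀ j ≤ n - 1, c j ∈ Set.Icc (0:ℝ) 1 := by
    intro j hj
    rcases Nat.eq_zero_or_pos j with h0 | h1
    · subst h0; rw [hc0]; exact ⟨le_rfl, zero_le_one⟩
    · rw [hc j h1 hj]; exact hxmem _ _ (by omega)
  have hcnext : ∀ j, j + 1 ≤ n - 1 → c (j + 1) = x (σ j) (j + 1) := by
    intro j hj
    simpa using hc (j + 1) (by omega) hj
  have hcmono : ∀ j, j + 1 ≤ n - 1 → c j ≤ c (j + 1) := by
    intro j hj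
    rw [hcnext j hj]
    exact le_trans (hkey j (by omega)) (hxm (σ j) j (j + 1) (Nat.le_succ j) (by omega))
  have hcchain : ∀ j k, j ≤ k → k ≤ n - 1 → c j ≤ c k := by
    intro j k hjk hkn
    induction k with
    | zero => simp [Nat.le_zero.mp hjk]
    | succ k ih =>
      rcases Nat.lt_or_ge j (k + 1) with h | h
      · exact le_trans (ih (Nat.lt_succ_iff.mp h) (by omega)) (hcmono k hkn)
      · have : j = k + 1 := le_antisymm hjk h
        simp [this]
  -- val of intervals as interval integrals
  have hvalIco : ∀ (g : ℝ → ℝ) (a b : ℝ), a ≤ b →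
      val g (Set.Ico a b) = ∫ t in a..b, g t := by
    intro g a b hab
    rw [val, MeasureTheory.integral_Ico_eq_integral_Ioo, intervalIntegral.integral_of_le hab,
      MeasureTheory.integral_Ioc_eq_integral_Ioo]
  have hvalIcc : ∀ (g : ℝ → ℝ) (a b : ℝ), a ≤ b →
      val g (Set.Icc a b) = ∫ t in a..b, g t := by
    intro g a b hab
    rw [val, MeasureTheory.integral_Icc_eq_integral_Ioc, intervalIntegral.integral_of_le hab]
    
  have hnpos : (0:ℕ) < n := by omega
  constructor
  · intro j hj
    set i := σ j with hi
    have hval01 : val (f i) (Set.Icc 0 1) = ∫ t in (0:ℝ)..1, f i t :=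
      hvalIcc (f i) 0 1 zero_le_one
    have hap : c j ≤ x i j := hkey j hj
    have hamem : c j ∈ Set.Icc (0:ℝ) 1 := hcmem j (by omega)
    have hpmem : x i j ∈ Set.Icc (0:ℝ) 1 := hxmem i j (le_of_lt hj)
    have hnn : (0:ℝ) ≤ ∫ t in c j..x i j, f i t := by
      apply intervalIntegral.integral_nonneg hap
      intro u hu
      exact le_of_lt (hpos i u ⟨le_trans hamem.1 hu.1, le_trans hu.2 hpmem.2⟩)
    by_cases hlast : j = n - 1
    · rw [hA j hj, if_pos hlast]
      have hx1 : x i n = 1 := hxn i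
      have ha1 : c j ≤ 1 := hamem.2
      have heq : (∫ t in x i j..(1:ℝ), f i t) = (1 / n) * ∫ t in (0:ℝ)..1, f i t := by
        have h := hxeq i j hj
        rwa [show j + 1 = n by omega, hx1] at h
      rw [hvalIcc (f i) (c j) 1 ha1, hval01,
        ← intervalIntegral.integral_add_adjacent_intervals
          (hii i (c j) (x i j) hamem hpmem)
          (hii i (x i j) 1 hpmem ⟨zero_le_one, le_rfl⟩), heq]
      linarith
    · rw [hA j hj, if_neg hlast]
      have hb : c (j + 1) = x i (j + 1) := hcnext j (by omega)
      have hpb : x i j ≤ x i (j + 1) := le_of_lt (hxmono i j hj)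
      have hbmem : x i (j + 1) ∈ Set.Icc (0:ℝ) 1 := hxmem i (j + 1) (by omega)
      have hab : c j ≤ c (j + 1) := by rw [hb]; exact le_trans hap hpb
      rw [hvalIco (f i) (c j) (c (j + 1)) hab, hval01, hb,
        ← intervalIntegral.integral_add_adjacent_intervals
          (hii i (c j) (x i j) hamem hpmem) (hii i (x i j) (x i (j + 1)) hpmem hbmem),
        hxeq i j hj]
      linarith
  · have claim : ∀ k ≤ n - 1,
        (⋃ j ∈ Finset.range k, Set.Ico (c j) (c (j + 1))) = Set.Ico (c 0) (c k) := by
      intro k hk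
      induction k with
      | zero => simp
      | succ k ih =>
        rw [Finset.range_add_one, Finset.set_biUnion_insert, ih (by omega), Set.union_comm,
          Set.Ico_union_Ico_eq_Ico (hcchain 0 k (Nat.zero_le _) (by omega)) (hcmono k hk)]
    have hm : n - 1 + 1 = n := by omega
    have hAeq : (⋃ j ∈ Finset.range (n - 1), A j)
        = ⋃ j ∈ Finset.range (n - 1), Set.Ico (c j) (c (j + 1)) := by
      apply Set.iUnion₂_congr
      intro j hj
      have hjlt : j < n - 1 := Finset.mem_range.mp hj
      rw [hA j (by omega), if_neg (by omega)]
    rw [← hm, Finset.range_add_one, Finset.set_biUnion_insert, hAeq, claim (n - 1) le_rfl, hc0,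
      hA (n - 1) (by omega), if_pos rfl, Set.union_comm,
      Set.Ico_union_Icc_eq_Icc (hcmem (n - 1) le_rfl).1 (hcmem (n - 1) le_rfl).2]
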